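/- arXiv:1408.0191 — 2 statements merged into one kernel-verified Lean document; each statement's English description precedes it below -/
import Mathlib

section
/- Let K be a field of characteristic p and let γ be the K-semilinear situation: G' = Z/pZ acts on K[x] by a K'-algebra automorphism γ with γ|_K = id_K and γ(x) = x + b for some b ∈ K, b ≠ 0. Then the invariant ring K[x]^{G'} equals K[x + (p-1) b^{1-p} x^p], which is a polynomial ring in one variable over K. -/
open Polynomial

section Aux

variable {K : Type*} [Field K] {p : ℕ} [Fact p.Prime] [CharP K p] {b : K}

/-- An invariant polynomial of degree `< p` is constant. -/
lemma aux_small_deg_const (hb : b ≠ 0) {r : K[X]} (hr : r.comp (X + C b) = r)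
    (hdeg : r.natDegree < p) : r = C (r.coeff 0) := by
  classical
  suffices hn : r.natDegree = 0 by
    exact (Polynomial.eq_C_of_natDegree_eq_zero hn)
  by_contra hn
  have hstep : ∀ a : K, r.eval (a + b) = r.eval a := by
    intro a
    nth_rewrite 2 [← hr]
    rw [eval_comp, eval_add, eval_X, eval_C]
  have hevals : ∀ k : ℕ, r.eval ((k : K) * b) = r.eval 0 := by
    intro k
    induction k with
    | zero => simp
    | succ k ih =>
      push_cast
      rw [add_mul, one_mul, hstep, ih]
  set s : K[X] := r - C (r.eval 0) with hs
  have hs0 : s ≠ 0 := by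
    intro h
    apply hn
    have : r = C (r.eval 0) := by rwa [sub_eq_zero] at h
    rw [this]; simp
  have hroots : ∀ k ∈ Finset.range p, ((k : K) * b) ∈ s.roots := by
    intro k _
    rw [mem_roots hs0]
    simp [hs, IsRoot, hevals k]
  have hinj : Set.InjOn (fun k : ℕ => (k : K) * b) (Finset.range p : Set ℕ) := by
    intro k hk l hl hkl
    simp only [Finset.coe_range, Set.mem_Iio] at hk hl
    have : (k : K) = l := mul_right_cancel₀ hb hkl
    exact CharP.natCast_injOn_Iio K p hk hl this
  have hcard : ((Finset.range p).image (fun k : ℕ => (k : K) * b)).card = p := by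
    rw [Finset.card_image_of_injOn hinj, Finset.card_range]
  have hsub : ((Finset.range p).image (fun k : ℕ => (k : K) * b)).val ⊆ s.roots := by
    intro x hx
    simp only [Finset.image_val, Multiset.mem_dedup, Multiset.mem_map] at hx
    obtain ⟨k, hk, rfl⟩ := hx
    exact hroots k (by simpa using hk)
  have hle := Polynomial.card_le_degree_of_subset_roots hsub
  rw [hcard] at hle
  have hsdeg : s.natDegree ≤ r.natDegree := by
    have : s.natDegree ≤ max r.natDegree (C (r.eval 0)).natDegree :=
      natDegree_sub_le _ _
    simpa using this
  omega

end Aux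

/-- Let `K` be a field of characteristic `p > 0` and let `γ` be the `K`-algebra automorphism
of `K[x]` with `γ(x) = x + b`, `b ≠ 0` (so `γ(f) = f(x + b)` and `γ` generates
`G' = ℤ/pℤ`).  Then the invariant ring `K[x]^{G'}` equals
`K[x + (p-1)·b^{1-p}·x^p]`, a polynomial ring in one variable over `K`. -/
theorem invariants_of_nonzero_translation (K : Type*) [Field K] (p : ℕ) [Fact p.Prime]
    [CharP K p] (b : K) (hb : b ≠ 0) :
    (∀ f : K[X], f.comp (X + C b) = f ↔
        f ∈ Algebra.adjoin K
          {(X : K[X]) + C (((p : K) - 1) * b ^ ((1 : ℤ) - (p : ℤ))) * X ^ p}) ∧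
      Nonempty ((Algebra.adjoin K
          {(X : K[X]) + C (((p : K) - 1) * b ^ ((1 : ℤ) - (p : ℤ))) * X ^ p}) ≃ₐ[K] K[X]) := by
  have hp : p.Prime := Fact.out
  have hp2 : 2 ≤ p := hp.two_le
  haveI : CharP K[X] p := charP_of_injective_algebraMap' (A := K[X]) K p
  set d : K := b ^ (p - 1) with hd
  have hd0 : d ≠ 0 := pow_ne_zero _ hb
  set c : K := ((p : K) - 1) * b ^ ((1 : ℤ) - (p : ℤ)) with hc
  have hcd : c = -d⁻¹ := by
    have hpK : (p : K) = 0 := CharP.cast_eq_zero K p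
    have : b ^ ((1 : ℤ) - (p : ℤ)) = d⁻¹ := by
      rw [hd, ← zpow_natCast b (p - 1), ← zpow_neg]
      congr 1
      omega
    rw [hc, this, hpK]
    ring
  have hc0 : c ≠ 0 := by
    rw [hcd]
    simp [hd0]
  set g : K[X] := X + C c * X ^ p with hg
  set h : K[X] := X ^ p - C d * X with hh
  -- g = C (-d⁻¹) * h
  have hgh : g = C c * h := by
    have hdd : (-d⁻¹) * d = -1 := by field_simp
    have key : (C (-d⁻¹) : K[X]) * (X ^ p - C d * X) = X + C (-d⁻¹) * X ^ p := by
      rw [mul_sub, ← mul_assoc, ← C_mul, hdd]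
      simp only [map_neg, map_one]
      ring
    rw [hg, hh, hcd]
    exact key.symm
  have hhg : h = C c⁻¹ * g := by
    rw [hgh, ← mul_assoc, ← map_mul, inv_mul_cancel₀ hc0, map_one, one_mul]
  -- degree facts
  have hdegCdX : (C d * X : K[X]).degree < (p : ℕ) := by
    calc (C d * X : K[X]).degree ≤ 1 := degree_C_mul_X_le d
    _ < (p : ℕ) := by exact_mod_cast (by omega : 1 < p)
  have hmonic : h.Monic := by
    rw [hh]
    exact monic_X_pow_sub hdegCdX
  have hdegh : h.degree = (p : ℕ) := by
    rw [hh, degree_sub_eq_left_of_degree_lt (by simpa [degree_X_pow] using hdegCdX)]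
    exact degree_X_pow p
  have hndegh : h.natDegree = p := natDegree_eq_of_degree_eq_some hdegh
  have hh1 : h ≠ 1 := by
    intro h1
    have := hndegh
    rw [h1] at this
    simp at this
    omega
  -- invariance of h
  have hinv : h.comp (X + C b) = h := by
    have hdb : d * b = b ^ p := by
      rw [hd, ← pow_succ]
      congr 1
      omega
    rw [hh]
    simp only [sub_comp, pow_comp, X_comp, mul_comp, C_comp]
    rw [add_pow_char (p := p), ← C_pow, mul_add, ← C_mul, hdb]
    ring
  -- the two adjoins agree
  have hadj : Algebra.adjoin K {g} = Algebra.adjoin K {h} := by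
    apply le_antisymm
    · rw [Algebra.adjoin_le_iff]
      intro x hx
      rw [Set.mem_singleton_iff] at hx
      subst hx
      rw [hgh]
      exact Subalgebra.mul_mem _ (Subalgebra.algebraMap_mem _ c)
        (Algebra.subset_adjoin rfl)
    · rw [Algebra.adjoin_le_iff]
      intro x hx
      rw [Set.mem_singleton_iff] at hx
      subst hx
      rw [hhg]
      exact Subalgebra.mul_mem _ (Subalgebra.algebraMap_mem _ c⁻¹)
        (Algebra.subset_adjoin rfl)
  -- main forward direction
  have hmain : ∀ n (f : K[X]), f.natDegree = n → f.comp (X + C b) = f →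
      f ∈ Algebra.adjoin K {h} := by
    intro n
    induction n using Nat.strong_induction_on with
    | _ n ih =>
      intro f hfn hf
      by_cases hsmall : f.natDegree < p
      · rw [aux_small_deg_const hb hf hsmall]
        exact Subalgebra.algebraMap_mem _ _
      · push_neg at hsmall
        set q := f /ₘ h with hq
        set r := f %ₘ h with hr
        have hsum : r + h * q = f := modByMonic_add_div f h
        have hdegr : r.degree < h.degree := degree_modByMonic_lt f hmonic
        have hcompsum : r.comp (X + C b) + h * q.comp (X + C b) = f := by
          conv_rhs => rw [← hf, ← hsum]
          simp only [add_comp, mul_comp, hinv]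
        have hdegrc : (r.comp (X + C b)).degree < h.degree := by
          rcases eq_or_ne r 0 with h0 | h0
          · rw [h0, zero_comp, degree_zero, hdegh]
            exact WithBot.bot_lt_coe _
          · have : (r.comp (X + C b)).natDegree = r.natDegree := by
              rw [natDegree_comp]
              simp [natDegree_X_add_C]
            have hc0' : r.comp (X + C b) ≠ 0 := fun hcc => by
              have := natDegree_comp (p := r) (q := X + C b)
              rw [comp_eq_zero_iff] at hcc
              rcases hcc with h1 | ⟨_, h2⟩
              · exact h0 h1
              · have h3 := congrArg natDegree h2
                simp [natDegree_X_add_C] at h3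
            rw [degree_eq_natDegree hc0', this, ← degree_eq_natDegree h0]
            exact hdegr
        have huniq := div_modByMonic_unique (q.comp (X + C b)) (r.comp (X + C b))
          hmonic ⟨hcompsum, hdegrc⟩
        have hqinv : q.comp (X + C b) = q := huniq.1.symm
        have hrinv : r.comp (X + C b) = r := huniq.2.symm
        have hf0 : f ≠ 0 := by
          intro h0
          rw [h0] at hsmall
          simp at hsmall
          omega
        have hqdeg : q.natDegree = f.natDegree - p := by
          rw [hq, natDegree_divByMonic f hmonic, hndegh]
        have hqlt : q.natDegree < n := by
          rw [hqdeg, hfn]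
          omega
        have hqmem : q ∈ Algebra.adjoin K {h} := ih _ hqlt q rfl hqinv
        have hrmem : r ∈ Algebra.adjoin K {h} := by
          have hrdeg : r.natDegree < p :=
            hndegh ▸ natDegree_modByMonic_lt f hmonic hh1
          rw [aux_small_deg_const hb hrinv hrdeg]
          exact Subalgebra.algebraMap_mem _ _
        rw [← hsum]
        exact Subalgebra.add_mem _ hrmem
          (Subalgebra.mul_mem _ (Algebra.subset_adjoin rfl) hqmem)
  constructor
  · intro f
    constructor
    · intro hf
      rw [hadj]
      exact hmain f.natDegree f rfl hf
    · intro hf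
      rw [hadj] at hf
      -- invariants form a subalgebra
      have : Algebra.adjoin K {h} ≤ AlgHom.equalizer (aeval (X + C b)) (AlgHom.id K K[X]) := by
        rw [Algebra.adjoin_le_iff]
        intro x hx
        rw [Set.mem_singleton_iff] at hx
        subst hx
        show aeval (X + C b) h = h
        rw [← comp_eq_aeval]
        exact hinv
      have := this hf
      rw [AlgHom.mem_equalizer] at this
      rw [comp_eq_aeval]
      exact this.trans rfl
  · -- the equivalence
    have hrange : Algebra.adjoin K {g} = (aeval g : K[X] →ₐ[K] K[X]).range :=
      Algebra.adjoin_singleton_eq_range_aeval K g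
    have hginj : Function.Injective (aeval g : K[X] →ₐ[K] K[X]) := by
      intro f1 f2 hf12
      rw [← sub_eq_zero]
      have : (f1 - f2).comp g = 0 := by
        rw [comp_eq_aeval, map_sub, hf12, sub_self]
      rw [comp_eq_zero_iff] at this
      rcases this with h1 | ⟨_, h2⟩
      · exact h1
      · exfalso
        have hng : g.natDegree = p := by
          rw [hgh, natDegree_C_mul hc0, hndegh]
        rw [h2] at hng
        simp at hng
        omega
    exact ⟨(Subalgebra.equivOfEq _ _ hrange).trans (AlgEquiv.ofInjective _ hginj).symm⟩
end

section
/- Let k be a field of characteristic p > 0 and let G = Z/pZ act on the polynomial ring k[x,y] by the k-algebra automorphism σ with σ(x) = x + y, σ(y) = y. Then the invariant ring k[x,y]^G equals k[x^p + (p-1) x y^{p-1}, y], and this invariant ring is isomorphic as a k-algebra to a polynomial ring in two variables. -/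
open MvPolynomial

/-- The `k`-algebra automorphism `σ` of `k[x,y]` with `σ(x) = x + y`, `σ(y) = y`. -/
noncomputable def sigmaMap (k : Type*) [CommRing k] :
    MvPolynomial (Fin 2) k →ₐ[k] MvPolynomial (Fin 2) k :=
  MvPolynomial.aeval ![X 0 + X 1, X 1]

set_option linter.unusedSectionVars false

section ShearAux
open Polynomial

variable (k : Type*) [Field k] (p : ℕ) [Fact p.Prime] [CharP k p]

noncomputable abbrev Akk := MvPolynomial (Fin 1) k
noncomputable abbrev y0 : Akk k := MvPolynomial.X 0
noncomputable abbrev npoly : Polynomial (Akk k) :=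
  Polynomial.X ^ p - Polynomial.C (y0 k ^ (p-1)) * Polynomial.X
noncomputable abbrev tau : Polynomial (Akk k) →ₐ[Akk k] Polynomial (Akk k) :=
  Polynomial.aeval (Polynomial.X + Polynomial.C (y0 k))

theorem AkkCharP : CharP (Akk k) p := by
  apply charP_of_injective_algebraMap (R := k)
  rw [MvPolynomial.algebraMap_eq]; exact MvPolynomial.C_injective _ _

theorem npoly_natDegree : (npoly k p).natDegree = p := by
  have h2 : 2 ≤ p := (Fact.out : p.Prime).two_le
  rw [npoly]
  rw [Polynomial.natDegree_sub_eq_left_of_natDegree_lt]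
  · exact Polynomial.natDegree_X_pow p
  · apply lt_of_le_of_lt (Polynomial.natDegree_mul_le)
    simp only [Polynomial.natDegree_C, Polynomial.natDegree_X, zero_add,
      Polynomial.natDegree_X_pow]
    omega

theorem npoly_monic : (npoly k p).Monic := by
  have h2 : 2 ≤ p := (Fact.out : p.Prime).two_le
  rw [Polynomial.Monic, Polynomial.leadingCoeff, npoly_natDegree]
  simp only [npoly, Polynomial.coeff_sub, Polynomial.coeff_X_pow, if_pos rfl,
    Polynomial.coeff_C_mul, Polynomial.coeff_X, if_neg (by omega : ¬ (1:ℕ) = p)]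
  simp



theorem tau_apply (g : Polynomial (Akk k)) :
    tau k g = Polynomial.taylor (y0 k) g := by
  rw [Polynomial.taylor_apply, tau, Polynomial.aeval_def, Polynomial.comp,
    Polynomial.algebraMap_eq]

theorem tau_npoly : tau k (npoly k p) = npoly k p := by
  haveI : CharP (Polynomial (Akk k)) p := by
    haveI := AkkCharP k p
    apply charP_of_injective_algebraMap (R := Akk k)
    rw [Polynomial.algebraMap_eq]; exact Polynomial.C_injective
  have h2 : 2 ≤ p := (Fact.out : p.Prime).two_le
  have hp1 : p - 1 + 1 = p := by omega
  rw [npoly, map_sub, map_pow, map_mul, Polynomial.aeval_X, Polynomial.aeval_C,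
    add_pow_char, ← Polynomial.C_pow, Polynomial.algebraMap_eq]
  rw [show Polynomial.C (y0 k ^ p) = Polynomial.C (y0 k ^ (p-1)) * Polynomial.C (y0 k) from by
    rw [← Polynomial.C_mul, ← pow_succ, hp1]]
  ring

theorem tau_fixed_isConst (g : Polynomial (Akk k)) (hfix : tau k g = g)
    (hdeg : g.natDegree < p) : g = Polynomial.C (g.coeff 0) := by
  by_cases hd : g.natDegree = 0
  · exact Polynomial.eq_C_of_natDegree_eq_zero hd
  · exfalso
    set d := g.natDegree with hdef
    have hd0 : 0 < d := Nat.pos_of_ne_zero hd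
    have hg0 : g ≠ 0 := fun h => hd (by simp [hdef, h])
    have hH : Polynomial.hasseDeriv (d - 1) g
        = Polynomial.C (g.coeff (d - 1)) + Polynomial.C ((d : Akk k) * g.coeff d) * Polynomial.X := by
      ext n
      rw [Polynomial.hasseDeriv_coeff]
      match n with
      | 0 =>
        simp [Nat.choose_self]
      | 1 =>
        have h1 : 1 + (d - 1) = d := by omega
        have hc : d.choose (d - 1) = d := by
          rw [Nat.choose_symm hd0, Nat.choose_one_right]
        simp [h1, hc, mul_comm]
      | (n + 2) =>
        have h1 : d < n + 2 + (d - 1) := by omega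
        have : g.coeff (n + 2 + (d - 1)) = 0 := Polynomial.coeff_eq_zero_of_natDegree_lt h1
        simp [this]
    have hco : g.coeff (d - 1) = g.coeff (d - 1) + (d : Akk k) * g.coeff d * y0 k := by
      conv_lhs => rw [← hfix]
      rw [tau_apply, Polynomial.taylor_coeff, hH]
      simp [mul_comm]
    have hzero : (d : Akk k) * g.coeff d * y0 k = 0 := by linear_combination -hco
    have hdne : (d : Akk k) ≠ 0 := by
      haveI := AkkCharP k p
      rw [Ne, CharP.cast_eq_zero_iff (Akk k) p]
      intro hdvd
      exact absurd (Nat.le_of_dvd hd0 hdvd) (by omega)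
    have : g.coeff d ≠ 0 := by
      rw [hdef]; exact Polynomial.coeff_ne_zero_of_eq_degree (Polynomial.degree_eq_natDegree hg0)
    rcases mul_eq_zero.1 hzero with h | h
    · rcases mul_eq_zero.1 h with h' | h'
      · exact hdne h'
      · exact this h'
    · exact MvPolynomial.X_ne_zero _ h

theorem aeval_fixed (q : Polynomial (Akk k)) :
    tau k (Polynomial.aeval (npoly k p) q) = Polynomial.aeval (npoly k p) q := by
  rw [← Polynomial.aeval_algHom_apply, tau_npoly]

theorem fixed_imp : ∀ (N : ℕ) (g : Polynomial (Akk k)), g.natDegree ≤ N → tau k g = g →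
    ∃ q : Polynomial (Akk k), Polynomial.aeval (npoly k p) q = g := by
  intro N
  induction N using Nat.strong_induction_on with
  | _ N ih =>
    intro g hN hfix
    have hp0 : 0 < p := (Fact.out : p.Prime).pos
    by_cases hsm : g.natDegree < p
    · refine ⟨Polynomial.C (g.coeff 0), ?_⟩
      rw [Polynomial.aeval_C, Polynomial.algebraMap_eq]
      exact (tau_fixed_isConst k p g hfix hsm).symm
    · push_neg at hsm
      have hmon := npoly_monic k p
      have hndeg := npoly_natDegree k p
      have hn0 : npoly k p ≠ 0 := hmon.ne_zero
      have hn1 : npoly k p ≠ 1 := by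
        intro h; rw [h] at hndeg; simp at hndeg; omega
      set n := npoly k p with hnoeq
      set q := g /ₘ n with hq
      set r := g %ₘ n with hr
      have key : r + n * q = g := Polynomial.modByMonic_add_div g n
      have hrdeg : r.natDegree < p := by
        have h := Polynomial.natDegree_modByMonic_lt g hmon hn1
        rw [← hr, hndeg] at h
        exact h
      have htaur : (tau k r).natDegree = r.natDegree := by
        rw [tau_apply, Polynomial.natDegree_taylor]
      have heq : n * (tau k q - q) = r - tau k r := by
        have h2 : tau k r + n * tau k q = g := by
          conv_rhs => rw [← hfix, ← key]
          rw [map_add, map_mul, tau_npoly]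
        have h3 : r + n * q = tau k r + n * tau k q := by rw [key, h2]
        ring_nf
        ring_nf at h3
        linear_combination -h3
      have hq_fix : tau k q = q := by
        by_contra hne
        have ht0 : tau k q - q ≠ 0 := sub_ne_zero.2 hne
        have hlhs : (n * (tau k q - q)).natDegree = p + (tau k q - q).natDegree := by
          rw [Polynomial.natDegree_mul hn0 ht0, hndeg]
        have hrhs : (r - tau k r).natDegree < p := by
          calc (r - tau k r).natDegree ≤ max r.natDegree (tau k r).natDegree :=
              Polynomial.natDegree_sub_le _ _
          _ < p := by rw [htaur]; simp [hrdeg]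
        rw [heq, hlhs] at *
        omega
      have hr_fix : tau k r = r := by
        rw [hq_fix, sub_self, mul_zero] at heq
        exact (sub_eq_zero.1 heq.symm).symm
      have hqdeg : q.natDegree ≤ N - 1 := by
        rw [hq, Polynomial.natDegree_divByMonic g hmon, hndeg]
        omega
      obtain ⟨q2, hq2⟩ := ih (N - 1) (by omega) q hqdeg hq_fix
      have hrconst : r = Polynomial.C (r.coeff 0) := tau_fixed_isConst k p r hr_fix hrdeg
      refine ⟨Polynomial.C (r.coeff 0) + Polynomial.X * q2, ?_⟩
      rw [map_add, map_mul, Polynomial.aeval_C, Polynomial.aeval_X, hq2,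
        Polynomial.algebraMap_eq, ← hrconst, key]

noncomputable abbrev NN : MvPolynomial (Fin 2) k :=
  (X 0 : MvPolynomial (Fin 2) k) ^ p + MvPolynomial.C ((p : k) - 1) * (X 0 * X 1 ^ (p - 1))

theorem fin2_one : (1 : Fin 2) = Fin.succ 0 := rfl

theorem E_X1 : finSuccEquiv k 1 (X 1) = Polynomial.C (y0 k) := by
  rw [fin2_one, finSuccEquiv_X_succ]

theorem E_NN : finSuccEquiv k 1 (NN k p) = npoly k p := by
  have hpk : ((p : k) - 1) = -1 := by rw [CharP.cast_eq_zero k p]; ring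
  rw [NN, hpk, map_add, map_pow, map_mul, map_mul, map_pow, finSuccEquiv_X_zero, E_X1]
  have hC : (finSuccEquiv k 1) (C (-1 : k)) = Polynomial.C (MvPolynomial.C (-1 : k)) := by
    simp
  rw [hC]
  rw [npoly]
  push_cast [map_neg, map_one]
  rw [← Polynomial.C_pow, ← Polynomial.C_1 (R := Akk k)]
  ring_nf
  rw [Polynomial.C_1]
  ring

theorem E_comm (f : MvPolynomial (Fin 2) k) :
    finSuccEquiv k 1 (sigmaMap k f) = tau k (finSuccEquiv k 1 f) := by
  have h : ((tau k).restrictScalars k).comp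
        ((finSuccEquiv k 1).toAlgHom : MvPolynomial (Fin 2) k →ₐ[k] Polynomial (Akk k))
      = ((finSuccEquiv k 1).toAlgHom : MvPolynomial (Fin 2) k →ₐ[k] Polynomial (Akk k)).comp
        (sigmaMap k) := by
    apply MvPolynomial.algHom_ext
    intro i
    simp only [AlgHom.coe_comp, Function.comp_apply, AlgHom.coe_restrictScalars',
      AlgEquiv.toAlgHom_eq_coe, AlgHom.coe_coe, AlgEquiv.coe_toAlgHom]
    refine Fin.cases ?_ (fun j => ?_) i
    · rw [finSuccEquiv_X_zero]
      rw [show (sigmaMap k) (X (0 : Fin 2)) = X 0 + X 1 from by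
        simp [sigmaMap, MvPolynomial.aeval_X]]
      rw [map_add, finSuccEquiv_X_zero, E_X1]
      simp [tau]
    · have hj : j = 0 := Subsingleton.elim _ _
      subst hj
      rw [show (Fin.succ 0 : Fin 2) = 1 from rfl]
      rw [show (sigmaMap k) (X (1 : Fin 2)) = X 1 from by
        simp [sigmaMap, MvPolynomial.aeval_X]]
      rw [E_X1]
      simp [tau, ← Polynomial.algebraMap_eq]
  exact (DFunLike.congr_fun h f).symm

theorem C_mem_adjoin (a : Akk k) :
    Polynomial.C a ∈ Algebra.adjoin k ({npoly k p, Polynomial.C (y0 k)} :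
      Set (Polynomial (Akk k))) := by
  have ha : a ∈ Algebra.adjoin k ({y0 k} : Set (Akk k)) := by
    have : Set.range (MvPolynomial.X : Fin 1 → Akk k) = {y0 k} := by
      ext z; constructor
      · rintro ⟨i, rfl⟩; rw [Subsingleton.elim i 0]; rfl
      · rintro rfl; exact ⟨0, rfl⟩
    rw [← this, MvPolynomial.adjoin_range_X]
    trivial
  induction ha using Algebra.adjoin_induction with
  | mem z hz =>
    rw [Set.mem_singleton_iff] at hz
    subst hz
    exact Algebra.subset_adjoin (Set.mem_insert_of_mem _ rfl)
  | algebraMap r =>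
    have h2 : Polynomial.C ((algebraMap k (Akk k)) r) = algebraMap k (Polynomial (Akk k)) r := by
      rw [IsScalarTower.algebraMap_apply k (Akk k) (Polynomial (Akk k)) r,
        Polynomial.algebraMap_eq]
    rw [show (algebraMap k (MvPolynomial (Fin 1) k)) r = (algebraMap k (Akk k)) r from rfl, h2]
    exact Subalgebra.algebraMap_mem _ r
  | add x y _ _ hx hy => rw [map_add]; exact Subalgebra.add_mem _ hx hy
  | mul x y _ _ hx hy => rw [map_mul]; exact Subalgebra.mul_mem _ hx hy

theorem mem_adjoin_iff (g : Polynomial (Akk k)) :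
    g ∈ Algebra.adjoin k ({npoly k p, Polynomial.C (y0 k)} : Set (Polynomial (Akk k)))
      ↔ ∃ q : Polynomial (Akk k), Polynomial.aeval (npoly k p) q = g := by
  constructor
  · intro hg
    have hle : Algebra.adjoin k ({npoly k p, Polynomial.C (y0 k)} : Set (Polynomial (Akk k)))
        ≤ ((Polynomial.aeval (npoly k p) : Polynomial (Akk k) →ₐ[Akk k]
            Polynomial (Akk k)).restrictScalars k).range := by
      rw [Algebra.adjoin_le_iff]
      rintro z (rfl | hz)
      · exact ⟨Polynomial.X, by simp⟩
      · rw [Set.mem_singleton_iff] at hz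
        subst hz
        exact ⟨Polynomial.C (y0 k), by simp [← Polynomial.algebraMap_eq]⟩
    obtain ⟨q, hq⟩ := hle hg
    exact ⟨q, hq⟩
  · rintro ⟨q, rfl⟩
    induction q using Polynomial.induction_on with
    | C a => rw [Polynomial.aeval_C, Polynomial.algebraMap_eq]; exact C_mem_adjoin k p a
    | add f g hf hg => rw [map_add]; exact Subalgebra.add_mem _ hf hg
    | monomial e a h =>
      rw [pow_succ, ← mul_assoc, map_mul]
      refine Subalgebra.mul_mem _ h ?_
      rw [Polynomial.aeval_X]
      exact Algebra.subset_adjoin (Set.mem_insert _ _)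

theorem aeval_npoly_inj :
    Function.Injective (Polynomial.aeval (npoly k p) :
      Polynomial (Akk k) →ₐ[Akk k] Polynomial (Akk k)) := by
  have hndeg : (npoly k p).natDegree = p := npoly_natDegree k p
  have key : ∀ c : Polynomial (Akk k), Polynomial.aeval (npoly k p) c = 0 → c = 0 := by
    intro c hc
    by_contra hc0
    have hcomp : Polynomial.aeval (npoly k p) c = c.comp (npoly k p) := by
      rw [Polynomial.aeval_def, Polynomial.comp, Polynomial.algebraMap_eq]
    have hlc : (c.comp (npoly k p)).leadingCoeff
        = c.leadingCoeff * (npoly k p).leadingCoeff ^ c.natDegree := by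
      apply Polynomial.leadingCoeff_comp
      rw [hndeg]; exact (Fact.out : p.Prime).ne_zero
    have hmon : (npoly k p).Monic := npoly_monic k p
    rw [hmon.leadingCoeff, one_pow, mul_one] at hlc
    have : c.comp (npoly k p) ≠ 0 := fun h => by
      rw [h, Polynomial.leadingCoeff_zero] at hlc
      exact hc0 (Polynomial.leadingCoeff_eq_zero.1 hlc.symm)
    rw [hcomp] at hc
    exact this hc
  intro a b hab
  have := key (a - b) (by rw [map_sub, hab, sub_self])
  exact sub_eq_zero.1 this

end ShearAux

section MainAux
open Polynomial

variable (k : Type*) [Field k] (p : ℕ) [Fact p.Prime] [CharP k p]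

theorem E_mem_iff (f : MvPolynomial (Fin 2) k) :
    f ∈ Algebra.adjoin k ({NN k p, X 1} : Set (MvPolynomial (Fin 2) k)) ↔
      finSuccEquiv k 1 f ∈ Algebra.adjoin k
        ({npoly k p, Polynomial.C (y0 k)} : Set (Polynomial (Akk k))) := by
  have hmap : (Algebra.adjoin k ({NN k p, X 1} : Set (MvPolynomial (Fin 2) k))).map
        ((finSuccEquiv k 1).toAlgHom : MvPolynomial (Fin 2) k →ₐ[k] Polynomial (Akk k))
      = Algebra.adjoin k ({npoly k p, Polynomial.C (y0 k)} : Set (Polynomial (Akk k))) := by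
    rw [AlgHom.map_adjoin, Set.image_insert_eq, Set.image_singleton]
    congr 1
    rw [show ((finSuccEquiv k 1).toAlgHom : MvPolynomial (Fin 2) k →ₐ[k] Polynomial (Akk k))
        (NN k p) = npoly k p from E_NN k p,
      show ((finSuccEquiv k 1).toAlgHom : MvPolynomial (Fin 2) k →ₐ[k] Polynomial (Akk k))
        (X 1) = Polynomial.C (y0 k) from E_X1 k]
  constructor
  · intro hf
    rw [← hmap]
    exact ⟨f, hf, rfl⟩
  · intro hf
    rw [← hmap] at hf
    obtain ⟨g, hg, hgf⟩ := hf
    have : g = f := (finSuccEquiv k 1).injective hgf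
    exact this ▸ hg

theorem main_iff (f : MvPolynomial (Fin 2) k) :
    sigmaMap k f = f ↔ f ∈ Algebra.adjoin k ({NN k p, X 1} :
      Set (MvPolynomial (Fin 2) k)) := by
  rw [E_mem_iff, mem_adjoin_iff]
  constructor
  · intro hfix
    have h1 : tau k (finSuccEquiv k 1 f) = finSuccEquiv k 1 f := by
      rw [← E_comm, hfix]
    exact fixed_imp k p (finSuccEquiv k 1 f).natDegree (finSuccEquiv k 1 f) le_rfl h1
  · rintro ⟨q, hq⟩
    apply (finSuccEquiv k 1).injective
    rw [E_comm, ← hq, aeval_fixed]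

theorem algInd : AlgebraicIndependent k ![NN k p, (X 1 : MvPolynomial (Fin 2) k)] := by
  have hcomp : ∀ f : MvPolynomial (Fin 2) k,
      finSuccEquiv k 1 (MvPolynomial.aeval ![NN k p, (X 1 : MvPolynomial (Fin 2) k)] f)
        = Polynomial.aeval (npoly k p) (finSuccEquiv k 1 f) := by
    have h : (((Polynomial.aeval (npoly k p) : Polynomial (Akk k) →ₐ[Akk k]
          Polynomial (Akk k)).restrictScalars k).comp
          ((finSuccEquiv k 1).toAlgHom : MvPolynomial (Fin 2) k →ₐ[k] Polynomial (Akk k)))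
        = ((finSuccEquiv k 1).toAlgHom : MvPolynomial (Fin 2) k →ₐ[k]
            Polynomial (Akk k)).comp (MvPolynomial.aeval ![NN k p, X 1]) := by
      apply MvPolynomial.algHom_ext
      intro i
      simp only [AlgHom.coe_comp, Function.comp_apply, AlgHom.coe_restrictScalars',
        AlgEquiv.toAlgHom_eq_coe, AlgHom.coe_coe, AlgEquiv.coe_toAlgHom]
      refine Fin.cases ?_ (fun j => ?_) i
      · rw [finSuccEquiv_X_zero, Polynomial.aeval_X,
          show (MvPolynomial.aeval ![NN k p, (X 1 : MvPolynomial (Fin 2) k)]) (X (0 : Fin 2))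
            = NN k p from by simp [MvPolynomial.aeval_X], E_NN]
      · have hj : j = 0 := Subsingleton.elim _ _
        subst hj
        rw [show (Fin.succ 0 : Fin 2) = 1 from rfl]
        rw [show (MvPolynomial.aeval ![NN k p, (X 1 : MvPolynomial (Fin 2) k)]) (X (1 : Fin 2))
            = X 1 from by simp [MvPolynomial.aeval_X], E_X1]
        simp [← Polynomial.algebraMap_eq]
    intro f
    exact (DFunLike.congr_fun h f).symm
  intro a b hab
  apply (finSuccEquiv k 1).injective
  apply aeval_npoly_inj k p
  rw [← hcomp, ← hcomp, hab]

theorem range_pair : Set.range ![NN k p, (X 1 : MvPolynomial (Fin 2) k)]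
    = {NN k p, (X 1 : MvPolynomial (Fin 2) k)} := by
  ext z
  constructor
  · rintro ⟨i, rfl⟩
    refine Fin.cases ?_ (fun j => ?_) i
    · left; simp
    · right
      have hj : j = 0 := Subsingleton.elim _ _
      subst hj
      simp [show (Fin.succ 0 : Fin 2) = 1 from rfl]
  · rintro (rfl | rfl)
    · exact ⟨0, rfl⟩
    · exact ⟨1, rfl⟩

theorem main_equiv : Nonempty ((Algebra.adjoin k ({NN k p, X 1} :
    Set (MvPolynomial (Fin 2) k))) ≃ₐ[k] MvPolynomial (Fin 2) k) := by
  have e := (algInd k p).aevalEquiv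
  rw [range_pair] at e
  exact ⟨e.symm⟩

end MainAux

/-- Let `k` be a field of characteristic `p > 0` and let `G = ℤ/pℤ` act on `k[x,y]` by
`σ(x) = x + y`, `σ(y) = y`.  Then the invariant ring `k[x,y]^G` equals
`k[x^p + (p-1)·x·y^{p-1}, y]`, and this invariant ring is isomorphic as a `k`-algebra to a
polynomial ring in two variables. -/
theorem invariants_of_shear_action (k : Type*) [Field k] (p : ℕ) [Fact p.Prime]
    [CharP k p] :
    (∀ f : MvPolynomial (Fin 2) k, sigmaMap k f = f ↔
        f ∈ Algebra.adjoin k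
          {(X 0 : MvPolynomial (Fin 2) k) ^ p + C ((p : k) - 1) * (X 0 * X 1 ^ (p - 1)),
            X 1}) ∧
      Nonempty ((Algebra.adjoin k
          {(X 0 : MvPolynomial (Fin 2) k) ^ p + C ((p : k) - 1) * (X 0 * X 1 ^ (p - 1)),
            X 1}) ≃ₐ[k] MvPolynomial (Fin 2) k) :=
  ⟨fun f => main_iff k p f, main_equiv k p⟩
end
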